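/- For every subset U ⊆ (ℝmax^n)^2, the set (U⋄)° is the smallest closed polar cone containing U: (U⋄)° is a closed polar cone, U ⊆ (U⋄)°, and (U⋄)° ⊆ W for every closed polar cone W with U ⊆ W. Analogously, (U⊤)⊥ is the smallest closed congruence containing U. -/

import Mathlib

open scoped Classical

noncomputable section

/-- The max-plus semiring `ℝmax = ℝ ∪ {-∞}`. Its `Add` is the max-plus
"multiplication" `a ⊗ b = a + b` (with `-∞` absorbing), its `max` is the
max-plus "addition". -/
abbrev Rmax := WithBot ℝ

/-- The order topology on `WithBot ℝ` (the topology of the metric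
`d(a,b) = |exp a - exp b|`). -/
instance : TopologicalSpace Rmax := Preorder.topology Rmax
instance : OrderTopology Rmax := ⟨rfl⟩

/-- Vectors of the max-plus semimodule `ℝmax^n`. -/
abbrev RmaxVec (n : ℕ) := Fin n → Rmax

/-- The max-plus linear combination `xλ ⊕ yμ`. -/
def maxComb {n : ℕ} (x y : RmaxVec n) (lam mu : Rmax) : RmaxVec n :=
  fun i => max (x i + lam) (y i + mu)

/-- `V ⊆ ℝmax^n` is a (max-plus) subsemimodule. -/
def IsSubsemimodule {n : ℕ} (V : Set (RmaxVec n)) : Prop :=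
  ∀ x ∈ V, ∀ y ∈ V, ∀ lam mu : Rmax, maxComb x y lam mu ∈ V

/-- `W ⊆ (ℝmax^n)² ≅ ℝmax^{2n}` is a (max-plus) subsemimodule,
with the entrywise operations. -/
def IsSubsemimodulePair {n : ℕ} (W : Set (RmaxVec n × RmaxVec n)) : Prop :=
  ∀ p ∈ W, ∀ q ∈ W, ∀ lam mu : Rmax,
    (maxComb p.1 q.1 lam mu, maxComb p.2 q.2 lam mu) ∈ W

/-- A pre-congruence: a subsemimodule of `(ℝmax^n)²` containing the diagonal
and transitive. -/
def IsPrecongruence {n : ℕ} (W : Set (RmaxVec n × RmaxVec n)) : Prop :=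
  IsSubsemimodulePair W ∧ (∀ f : RmaxVec n, (f, f) ∈ W) ∧
    ∀ f g h : RmaxVec n, (f, g) ∈ W → (g, h) ∈ W → (f, h) ∈ W

/-- A polar cone: a pre-congruence such that `f ≤ g` implies `(f,g) ∈ W`. -/
def IsPolarCone {n : ℕ} (W : Set (RmaxVec n × RmaxVec n)) : Prop :=
  IsPrecongruence W ∧ ∀ f g : RmaxVec n, f ≤ g → (f, g) ∈ W

/-- A congruence: a symmetric pre-congruence. -/
def IsCongruence {n : ℕ} (W : Set (RmaxVec n × RmaxVec n)) : Prop :=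
  IsPrecongruence W ∧ ∀ f g : RmaxVec n, (f, g) ∈ W → (g, f) ∈ W

/-- The max-plus bracket `⟨y, x⟩ = max_i (y_i + x_i)`. -/
def mpBracket {n : ℕ} (y x : RmaxVec n) : Rmax :=
  Finset.univ.sup fun i => y i + x i

/-- The polar `V°` of `V ⊆ ℝmax^n`. -/
def mpPolar {n : ℕ} (V : Set (RmaxVec n)) : Set (RmaxVec n × RmaxVec n) :=
  { p | ∀ x ∈ V, mpBracket p.1 x ≤ mpBracket p.2 x }

/-- The orthogonal `V⊥` of `V ⊆ ℝmax^n`. -/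
def mpOrtho {n : ℕ} (V : Set (RmaxVec n)) : Set (RmaxVec n × RmaxVec n) :=
  { p | ∀ x ∈ V, mpBracket p.1 x = mpBracket p.2 x }

/-- The dual polar `W⋄` of `W ⊆ (ℝmax^n)²`. -/
def mpDiamond {n : ℕ} (W : Set (RmaxVec n × RmaxVec n)) : Set (RmaxVec n) :=
  { x | ∀ p ∈ W, mpBracket p.1 x ≤ mpBracket p.2 x }

/-- The dual orthogonal `W⊤` of `W ⊆ (ℝmax^n)²`. -/
def mpTop {n : ℕ} (W : Set (RmaxVec n × RmaxVec n)) : Set (RmaxVec n) :=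
  { x | ∀ p ∈ W, mpBracket p.1 x = mpBracket p.2 x }

set_option linter.dupNamespace false

namespace MPAux

variable {n : ℕ}

/-- scaling of a vector -/
def sc (x : RmaxVec n) (l : Rmax) : RmaxVec n := fun i => x i + l

/-- single-coordinate vector -/
def sgl (j : Fin n) (a : Rmax) : RmaxVec n := fun i => if i = j then a else ⊥

def botv : RmaxVec n := fun _ => ⊥

lemma botv_le (y : RmaxVec n) : botv ≤ y := fun _ => bot_le

lemma maxComb_self (x : RmaxVec n) (l : Rmax) : maxComb x x l l = sc x l := by
  funext i; simp [maxComb, sc]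

lemma maxComb_zero (x y : RmaxVec n) : maxComb x y 0 0 = fun i => x i ⊔ y i := by
  funext i; simp [maxComb]

lemma sgl_le_of_le {j : Fin n} {a : Rmax} {y : RmaxVec n} (h : a ≤ y j) : sgl j a ≤ y := by
  intro i; by_cases hi : i = j <;> simp [sgl, hi]
  · exact hi ▸ h

lemma sgl_bot (j : Fin n) : sgl j (⊥ : Rmax) = botv := by
  funext i; by_cases hi : i = j <;> simp [sgl, botv, hi]

-- bracket lemmas
lemma mpBracket_mono {y y' : RmaxVec n} (x : RmaxVec n) (h : y ≤ y') :
    mpBracket y x ≤ mpBracket y' x := by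
  apply Finset.sup_mono_fun
  intro i _
  exact add_le_add (h i) le_rfl

lemma mpBracket_bot (x : RmaxVec n) : mpBracket botv x = ⊥ := by
  simp [mpBracket, botv]

lemma mpBracket_sc (y x : RmaxVec n) (l : Rmax) :
    mpBracket (sc y l) x = mpBracket y x + l := by
  unfold mpBracket sc
  rw [Finset.comp_sup_eq_sup_comp (fun a : Rmax => a + l)]
  · apply Finset.sup_congr rfl
    intro i _
    show y i + l + x i = y i + x i + l
    exact add_right_comm _ _ _
  · intro a b
    exact (monotone_id.add_const l).map_max
  · exact WithBot.bot_add l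

lemma mpBracket_maxComb (u v x : RmaxVec n) (lam mu : Rmax) :
    mpBracket (maxComb u v lam mu) x
      = (mpBracket u x + lam) ⊔ (mpBracket v x + mu) := by
  have : mpBracket (maxComb u v lam mu) x
      = mpBracket (sc u lam) x ⊔ mpBracket (sc v mu) x := by
    unfold mpBracket
    rw [← Finset.sup_sup]
    apply Finset.sup_congr rfl
    intro i _
    show maxComb u v lam mu i + x i = _
    simp only [maxComb, sc, Pi.sup_apply]
    rcases le_total (u i + lam) (v i + mu) with h | h
    · rw [max_eq_right h, max_eq_right (add_le_add h le_rfl)]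
    · rw [max_eq_left h, max_eq_left (add_le_add h le_rfl)]
  rw [this, mpBracket_sc, mpBracket_sc]

lemma mpBracket_sgl (j : Fin n) (a : Rmax) (x : RmaxVec n) :
    mpBracket (sgl j a) x = a + x j := by
  unfold mpBracket
  apply le_antisymm
  · apply Finset.sup_le
    intro i _
    by_cases hi : i = j <;> simp [sgl, hi]
  · exact Finset.le_sup_of_le (Finset.mem_univ j) (by simp [sgl])

end MPAux

namespace MPAux
variable {n : ℕ} {W : Set (RmaxVec n × RmaxVec n)}

section PC
variable (hP : IsPolarCone W)
include hP

lemma pc_scale {u v : RmaxVec n} (h : (u, v) ∈ W) (l : Rmax) : (sc u l, sc v l) ∈ W := by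
  have := hP.1.1 (u,v) h (u,v) h l l
  rwa [maxComb_self, maxComb_self] at this

lemma pc_sup {u v u' v' : RmaxVec n} (h : (u, v) ∈ W) (h' : (u', v') ∈ W) :
    ((fun i => u i ⊔ u' i), (fun i => v i ⊔ v' i)) ∈ W := by
  have := hP.1.1 (u,v) h (u',v') h' 0 0
  rwa [maxComb_zero, maxComb_zero] at this

lemma pc_left {u u' v : RmaxVec n} (hle : u' ≤ u) (h : (u, v) ∈ W) : (u', v) ∈ W :=
  hP.1.2.2 _ _ _ (hP.2 _ _ hle) h

lemma pc_right {u v v' : RmaxVec n} (h : (u, v) ∈ W) (hle : v ≤ v') : (u, v') ∈ W :=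
  hP.1.2.2 _ _ _ h (hP.2 _ _ hle)

lemma pc_bot (y : RmaxVec n) : (botv, y) ∈ W := hP.2 _ _ (botv_le y)

/-- finite sup decomposition: membership from single-coordinate memberships -/
lemma pc_fsup {c y : RmaxVec n} (h : ∀ j, (sgl j (c j), y) ∈ W) : (c, y) ∈ W := by
  have key : ∀ s : Finset (Fin n), ((fun i => if i ∈ s then c i else ⊥), y) ∈ W := by
    intro s
    induction s using Finset.induction with
    | empty => convert pc_bot hP y using 2; funext i; simp [botv]
    | @insert a s ha ih =>
      have := pc_sup hP (h a) ih
      have e2 : (fun i => y i ⊔ y i) = y := by funext i; simp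
      rw [e2] at this
      convert this using 2
      funext i
      by_cases hia : i = a
      · subst hia
        by_cases his : i ∈ s <;> simp [sgl, his]
      · by_cases his : i ∈ s <;> simp [sgl, hia, his, Finset.mem_insert]
  have := key Finset.univ
  simpa using this

end PC

-- topology lemmas
lemma tend_bot {s : ℕ → ℝ} (hs : Filter.Tendsto s Filter.atTop Filter.atBot) :
    Filter.Tendsto (fun k => (s k : Rmax)) Filter.atTop (nhds ⊥) := by
  refine tendsto_order.2 ⟨fun a ha => absurd ha (by simp), fun a ha => ?_⟩
  rcases WithBot.ne_bot_iff_exists.1 ha.ne' with ⟨r, rfl⟩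
  filter_upwards [hs.eventually (Filter.eventually_lt_atBot r)] with k hk
  exact_mod_cast hk

lemma tend_coe {u : ℕ → ℝ} {r : ℝ} (hu : Filter.Tendsto u Filter.atTop (nhds r)) :
    Filter.Tendsto (fun k => (u k : Rmax)) Filter.atTop (nhds (r : Rmax)) := by
  refine tendsto_order.2 ⟨fun a ha => ?_, fun a ha => ?_⟩
  · induction a using WithBot.recBotCoe with
    | bot => exact Filter.Eventually.of_forall fun k => by simp
    | coe b =>
      have hb : b < r := by exact_mod_cast ha
      filter_upwards [hu.eventually (eventually_gt_nhds hb)] with k hk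
      exact_mod_cast hk
  · induction a using WithBot.recBotCoe with
    | bot => exact absurd ha (by simp)
    | coe b =>
      have hb : r < b := by exact_mod_cast ha
      filter_upwards [hu.eventually (eventually_lt_nhds hb)] with k hk
      exact_mod_cast hk

-- sequence converging to csSup
lemma seq_to_csSup {s : Set Rmax} (hne : s.Nonempty) (hbdd : BddAbove s) :
    ∃ u : ℕ → Rmax, (∀ k, u k ∈ s) ∧ Filter.Tendsto u Filter.atTop (nhds (sSup s)) := by
  by_cases hmem : sSup s ∈ s
  · exact ⟨fun _ => sSup s, fun _ => hmem, tendsto_const_nhds⟩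
  · -- sSup s ∉ s; then sSup s ≠ ⊥
    have hnb : sSup s ≠ ⊥ := by
      intro hb
      rcases hne with ⟨a, ha⟩
      have : a ≤ sSup s := le_csSup hbdd ha
      rw [hb, le_bot_iff] at this
      exact hmem (by rw [hb, ← this]; exact ha)
    rcases WithBot.ne_bot_iff_exists.1 hnb with ⟨r, hr⟩
    have hex : ∀ k : ℕ, ∃ a ∈ s, ((r - 1/(k+1) : ℝ) : Rmax) < a := by
      intro k
      by_contra hcon
      push_neg at hcon
      have : sSup s ≤ ((r - 1/(k+1) : ℝ) : Rmax) := csSup_le hne hcon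
      rw [← hr] at this
      have : (r : ℝ) ≤ r - 1/(k+1) := by exact_mod_cast this
      have hpos : (0:ℝ) < 1/(k+1) := by positivity
      linarith
    choose u hu1 hu2 using hex
    refine ⟨u, hu1, ?_⟩
    rw [← hr]
    have hlow : Filter.Tendsto (fun k : ℕ => ((r - 1/(k+1) : ℝ) : Rmax)) Filter.atTop (nhds (r : Rmax)) := by
      apply tend_coe
      have : Filter.Tendsto (fun k : ℕ => 1/((k:ℝ)+1)) Filter.atTop (nhds 0) :=
        tendsto_one_div_add_atTop_nhds_zero_nat
      simpa using (tendsto_const_nhds (x := r)).sub this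
    refine tendsto_of_tendsto_of_tendsto_of_le_of_le hlow tendsto_const_nhds
      (fun k => (hu2 k).le) (fun k => ?_)
    rw [hr]
    exact le_csSup hbdd (hu1 k)

end MPAux

namespace MPAux
variable {n : ℕ} {W : Set (RmaxVec n × RmaxVec n)}

open Filter Topology

lemma tend_bot_of_ge (c : ℝ) (r : ℕ → ℝ) (hr : ∀ k : ℕ, (k:ℝ) ≤ r k) :
    Tendsto (fun k => ((c - r k : ℝ) : Rmax)) atTop (𝓝 ⊥) := by
  apply tend_bot
  have h1 : ∀ k : ℕ, c - r k ≤ c - (k:ℝ) := fun k => by linarith [hr k]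
  apply tendsto_atBot_mono h1
  apply tendsto_atBot_add_const_left
  exact tendsto_neg_atBot_iff.2 tendsto_natCast_atTop_atTop

lemma coe_real_of_ne_bot {a : Rmax} (h : a ≠ ⊥) : ∃ r : ℝ, a = (r : Rmax) := by
  rcases WithBot.ne_bot_iff_exists.1 h with ⟨r, hr⟩
  exact ⟨r, hr.symm⟩

/-- Core separation lemma. -/
lemma sep_core (hW : IsClosed W) (hP : IsPolarCone W) (f g' : RmaxVec n) (M : ℝ)
    (hg' : ∀ i, ((-M : ℝ) : Rmax) ≤ g' i) (hfg : (f, g') ∉ W) :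
    ∃ x : RmaxVec n, (∀ p ∈ W, mpBracket p.1 x ≤ mpBracket p.2 x) ∧
      mpBracket g' x < mpBracket f x := by
  classical
  set A : Fin n → Set Rmax := fun j => {a | ∃ w, (w, g') ∈ W ∧ w j = a} with hA
  have hdiag : (g', g') ∈ W := hP.1.2.1 g'
  have hAne : ∀ j, (A j).Nonempty := fun j => ⟨g' j, g', hdiag, rfl⟩
  have hg'A : ∀ j, g' j ∈ A j := fun j => ⟨g', hdiag, rfl⟩
  have hg'ne : ∀ i, g' i ≠ ⊥ := fun i hb => by
    have := hg' i; rw [hb, le_bot_iff] at this; exact WithBot.coe_ne_bot this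
  -- T-freeness: unbounded coordinates are fully free
  have hfree : ∀ j, ¬ BddAbove (A j) → ∀ (c : Rmax) (y : RmaxVec n), (sgl j c, y) ∈ W := by
    intro j hnb c y
    induction c using WithBot.recBotCoe with
    | bot => rw [sgl_bot]; exact pc_bot hP y
    | coe cr =>
      have hex : ∀ k : ℕ, ∃ rk : ℝ, (∃ w, (w, g') ∈ W ∧ w j = (rk : Rmax)) ∧ (k:ℝ) ≤ rk := by
        intro k
        rcases not_bddAbove_iff.1 hnb ((k:ℝ) : Rmax) with ⟨a, ⟨w, hw, hwj⟩, hka⟩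
        have hane : a ≠ ⊥ := fun hb => by rw [hb] at hka; exact absurd hka (by simp)
        rcases coe_real_of_ne_bot hane with ⟨rk, rfl⟩
        exact ⟨rk, ⟨w, hw, hwj⟩, by exact_mod_cast hka.le⟩
      choose r hr1 hr2 using hex
      have hpair : ∀ k : ℕ, ((sgl j (cr : Rmax)), sc g' ((cr - r k : ℝ) : Rmax)) ∈ W := by
        intro k
        rcases hr1 k with ⟨w, hw, hwj⟩
        have h1 : (sgl j ((r k : ℝ) : Rmax), g') ∈ W :=
          pc_left hP (sgl_le_of_le (le_of_eq hwj.symm)) hw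
        have h2 := pc_scale hP h1 ((cr - r k : ℝ) : Rmax)
        have e1 : sc (sgl j ((r k : ℝ) : Rmax)) ((cr - r k : ℝ) : Rmax) = sgl j (cr : Rmax) := by
          funext i
          by_cases hij : i = j
          · simp only [sc, sgl, hij, if_pos]
            rw [← WithBot.coe_add]
            norm_num
          · simp only [sc, sgl, if_neg hij]
            exact WithBot.bot_add _
        rwa [e1] at h2
      have hlim : Tendsto (fun k => ((sgl j (cr : Rmax)), sc g' ((cr - r k : ℝ) : Rmax)))
          atTop (𝓝 ((sgl j (cr : Rmax)), botv)) := by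
        refine Tendsto.prodMk_nhds tendsto_const_nhds ?_
        rw [tendsto_pi_nhds]
        intro i
        rcases coe_real_of_ne_bot (hg'ne i) with ⟨gi, hgi⟩
        have e2 : (fun k => sc g' ((cr - r k : ℝ) : Rmax) i)
            = fun k => (((gi + cr) - r k : ℝ) : Rmax) := by
          funext k
          show g' i + _ = _
          rw [hgi, ← WithBot.coe_add]
          congr 1
          ring
        rw [e2]
        exact tend_bot_of_ge (gi + cr) r hr2
      have hmem : ((sgl j (cr : Rmax)), botv) ∈ W :=
        hW.mem_of_tendsto hlim (Filter.Eventually.of_forall hpair)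
      exact pc_right hP hmem (botv_le y)
  -- the projection vector h
  set h : RmaxVec n := fun j => if BddAbove (A j) then sSup (A j) else f j ⊔ g' j with hh
  have hhW : (h, g') ∈ W := by
    apply pc_fsup hP
    intro j
    by_cases hb : BddAbove (A j)
    · rcases seq_to_csSup (hAne j) hb with ⟨u, hu1, hu2⟩
      have hpair : ∀ k, ((sgl j (u k)), g') ∈ W := by
        intro k
        rcases hu1 k with ⟨w, hw, hwj⟩
        exact pc_left hP (sgl_le_of_le (le_of_eq hwj.symm)) hw
      have hlim : Tendsto (fun k => ((sgl j (u k)), g')) atTop (𝓝 ((sgl j (sSup (A j))), g')) := by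
        refine Tendsto.prodMk_nhds ?_ tendsto_const_nhds
        rw [tendsto_pi_nhds]
        intro i
        by_cases hij : i = j
        · simpa [sgl, hij] using hu2
        · simp only [sgl, if_neg hij]
          exact tendsto_const_nhds
      have hmem := hW.mem_of_tendsto hlim (Filter.Eventually.of_forall hpair)
      have e : h j = sSup (A j) := by rw [hh]; simp only [if_pos hb]
      rwa [← e] at hmem
    · have e : h j = f j ⊔ g' j := by rw [hh]; simp only [if_neg hb]
      rw [e]; exact hfree j hb _ g'
  have hg'h : ∀ j, g' j ≤ h j := by
    intro j
    rw [hh]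
    by_cases hb : BddAbove (A j)
    · simp only [if_pos hb]
      exact le_csSup hb (hg'A j)
    · simp only [if_neg hb]
      exact le_sup_right
  -- witness coordinate
  have hex2 : ∃ i, h i < f i := by
    by_contra hcon
    push_neg at hcon
    exact hfg (pc_left hP (fun i => hcon i) hhW)
  obtain ⟨i, hi⟩ := hex2
  have hBi : BddAbove (A i) := by
    by_contra hnb
    have e : h i = f i ⊔ g' i := by rw [hh]; simp only [if_neg hnb]
    rw [e] at hi
    exact absurd hi (not_lt.2 le_sup_left)
  have hhne : ∀ j, BddAbove (A j) → h j ≠ ⊥ := by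
    intro j hb hbot
    have h2 := hg'h j
    rw [hbot, le_bot_iff] at h2
    exact hg'ne j h2
  -- the separating vector x
  set x : RmaxVec n := fun j =>
    if BddAbove (A j) then (((-(WithBot.unbotD 0 (h j)) : ℝ)) : Rmax) else ⊥ with hx
  have hxval : ∀ j, BddAbove (A j) → h j = (((WithBot.unbotD 0 (h j)) : ℝ) : Rmax) := by
    intro j hb
    rcases coe_real_of_ne_bot (hhne j hb) with ⟨r, hr⟩
    rw [hr]; simp
  have hxpos : ∀ j, BddAbove (A j) → x j = (((-(WithBot.unbotD 0 (h j)) : ℝ)) : Rmax) := by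
    intro j hb; rw [hx]; simp only [if_pos hb]
  have hxneg : ∀ j, ¬ BddAbove (A j) → x j = ⊥ := by
    intro j hb; rw [hx]; simp only [if_neg hb]
  have hbdd_of_xne : ∀ j, x j ≠ ⊥ → BddAbove (A j) := by
    intro j hxne
    by_contra hnb
    exact hxne (hxneg j hnb)
  -- bracket bounds
  have hgx : mpBracket g' x ≤ 0 := by
    apply Finset.sup_le
    intro j _
    by_cases hb : BddAbove (A j)
    · have h1 : g' j + x j ≤ h j + x j := add_le_add (hg'h j) le_rfl
      refine h1.trans ?_
      rw [hxpos j hb, hxval j hb, ← WithBot.coe_add]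
      exact_mod_cast (by linarith : ((WithBot.unbotD 0 (h j)) + -(WithBot.unbotD 0 (h j)) : ℝ) ≤ 0)
    · rw [hxneg j hb, WithBot.add_bot]; exact bot_le
  have hfx : (0 : Rmax) < mpBracket f x := by
    rw [mpBracket]
    apply Finset.lt_sup_iff.2
    refine ⟨i, Finset.mem_univ i, ?_⟩
    have hfne : f i ≠ ⊥ := fun hb => by rw [hb] at hi; exact absurd hi (by simp)
    rcases coe_real_of_ne_bot hfne with ⟨fr, hfr⟩
    have hir := hxval i hBi
    have hlt2 : (WithBot.unbotD 0 (h i)) < fr := by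
      rw [hir, hfr] at hi; exact_mod_cast hi
    rw [hxpos i hBi, hfr, ← WithBot.coe_add]
    exact_mod_cast (by linarith : (0:ℝ) < fr + -(WithBot.unbotD 0 (h i)))
  refine ⟨x, ?_, lt_of_le_of_lt hgx hfx⟩
  -- x is in the diamond
  rintro ⟨u, v⟩ hp
  show mpBracket u x ≤ mpBracket v x
  by_contra hlt
  rw [not_le] at hlt
  by_cases hvb : mpBracket v x = ⊥
  · -- bottom case: v is supported on free coordinates
    have hterm : ∀ j, v j + x j = ⊥ := by
      intro j
      exact (Finset.sup_eq_bot_iff _ _).1 hvb j (Finset.mem_univ j)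
    have hvbot : ∀ j, BddAbove (A j) → v j = ⊥ := by
      intro j hb
      rcases WithBot.add_eq_bot.1 (hterm j) with h1 | h2
      · exact h1
      · exact absurd (hxpos j hb ▸ h2) WithBot.coe_ne_bot
    have hvW : ∀ μ : ℝ, (sc v ((μ:ℝ):Rmax), g') ∈ W := by
      intro μ
      apply pc_fsup hP
      intro j
      by_cases hb : BddAbove (A j)
      · have e : sc v ((μ:ℝ):Rmax) j = ⊥ := by
          show v j + _ = ⊥
          rw [hvbot j hb, WithBot.bot_add]
        rw [e, sgl_bot]
        exact pc_bot hP g'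
      · exact hfree j hb _ g'
    have huW : ∀ μ : ℝ, (sc u ((μ:ℝ):Rmax), g') ∈ W := fun μ =>
      hP.1.2.2 _ _ _ (pc_scale hP hp _) (hvW μ)
    rw [hvb, show mpBracket u x = Finset.univ.sup (fun i => u i + x i) from rfl] at hlt
    obtain ⟨j1, _, hj1⟩ := Finset.lt_sup_iff.1 hlt
    have hxne : x j1 ≠ ⊥ := fun hb => by
      rw [hb, WithBot.add_bot] at hj1; exact absurd hj1 (lt_irrefl _)
    have hune : u j1 ≠ ⊥ := fun hb => by
      rw [hb, WithBot.bot_add] at hj1; exact absurd hj1 (lt_irrefl _)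
    have hb1 : BddAbove (A j1) := hbdd_of_xne j1 hxne
    rcases coe_real_of_ne_bot hune with ⟨ur, hur⟩
    rcases hb1 with ⟨b, hbub⟩
    have hble : ∀ μ : ℝ, u j1 + ((μ:ℝ):Rmax) ≤ b := fun μ =>
      hbub ⟨sc u ((μ:ℝ):Rmax), huW μ, rfl⟩
    have hbne : b ≠ ⊥ := fun hbb => by
      have h0 := hble 0
      rw [hbb, le_bot_iff, hur, ← WithBot.coe_add] at h0
      exact WithBot.coe_ne_bot h0
    rcases coe_real_of_ne_bot hbne with ⟨br, hbr⟩
    have hcontr := hble (br - ur + 1)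
    rw [hur, hbr, ← WithBot.coe_add] at hcontr
    have : ur + (br - ur + 1) ≤ br := by exact_mod_cast hcontr
    linarith
  · -- finite case
    rcases coe_real_of_ne_bot hvb with ⟨l, hl⟩
    have hvle : ∀ j, v j + x j ≤ (l : Rmax) := by
      intro j; rw [← hl]; exact Finset.le_sup (f := fun i => v i + x i) (Finset.mem_univ j)
    set m : RmaxVec n := fun j =>
      if BddAbove (A j) then h j else h j ⊔ (v j + ((-l:ℝ):Rmax)) with hm
    have hscv : sc v ((-l:ℝ):Rmax) ≤ m := by
      intro j
      rw [hm]
      by_cases hb : BddAbove (A j)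
      · simp only [if_pos hb]
        show v j + _ ≤ h j
        by_cases hvj : v j = ⊥
        · rw [hvj, WithBot.bot_add]; exact bot_le
        · rcases coe_real_of_ne_bot hvj with ⟨vr, hvr⟩
          have h2 := hvle j
          rw [hvr, hxpos j hb, ← WithBot.coe_add] at h2
          have h3 : vr + -(WithBot.unbotD 0 (h j)) ≤ l := by exact_mod_cast h2
          rw [hvr, hxval j hb, ← WithBot.coe_add]
          exact_mod_cast (by linarith : vr + -l ≤ (WithBot.unbotD 0 (h j)))
      · simp only [if_neg hb]
        exact le_sup_right
    have hmW : (m, g') ∈ W := by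
      apply pc_fsup hP
      intro j
      by_cases hb : BddAbove (A j)
      · have e : m j = h j := by rw [hm]; simp only [if_pos hb]
        rw [e]
        exact pc_left hP (sgl_le_of_le (le_refl (h j))) hhW
      · exact hfree j hb _ g'
    have huW : (sc u ((-l:ℝ):Rmax), g') ∈ W :=
      hP.1.2.2 _ _ _ (pc_scale hP hp _)
        (hP.1.2.2 _ _ _ (hP.2 _ _ hscv) hmW)
    have hub : ∀ j, BddAbove (A j) → u j + ((-l:ℝ):Rmax) ≤ h j := by
      intro j hb
      have hmem : (u j + ((-l:ℝ):Rmax)) ∈ A j := ⟨sc u ((-l:ℝ):Rmax), huW, rfl⟩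
      have e : h j = sSup (A j) := by rw [hh]; simp only [if_pos hb]
      rw [e]
      exact le_csSup hb hmem
    rw [hl, show mpBracket u x = Finset.univ.sup (fun i => u i + x i) from rfl] at hlt
    obtain ⟨j1, _, hj1⟩ := Finset.lt_sup_iff.1 hlt
    have hxne : x j1 ≠ ⊥ := fun hb => by
      rw [hb, WithBot.add_bot] at hj1
      exact absurd hj1 (by simp)
    have hune : u j1 ≠ ⊥ := fun hb => by
      rw [hb, WithBot.bot_add] at hj1
      exact absurd hj1 (by simp)
    have hb1 : BddAbove (A j1) := hbdd_of_xne j1 hxne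
    rcases coe_real_of_ne_bot hune with ⟨ur, hur⟩
    have hc1 := hub j1 hb1
    rw [hur, hxval j1 hb1, ← WithBot.coe_add] at hc1
    have hc2 : ur + -l ≤ (WithBot.unbotD 0 (h j1)) := by exact_mod_cast hc1
    rw [hur, hxpos j1 hb1, ← WithBot.coe_add] at hj1
    have hc3 : l < ur + -(WithBot.unbotD 0 (h j1)) := by exact_mod_cast hj1
    linarith

end MPAux

namespace MPAux
variable {n : ℕ} {W : Set (RmaxVec n × RmaxVec n)}
open Filter Topology

/-- Bidual theorem for closed polar cones. -/
lemma polar_bidual (hW : IsClosed W) (hP : IsPolarCone W) :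
    mpPolar (mpDiamond W) ⊆ W := by
  rintro ⟨f, g⟩ hmem
  by_contra hfg
  -- find M with (f, g ⊔ (-M)) ∉ W
  have hM : ∃ M : ℕ, (f, fun i => g i ⊔ ((-(M:ℝ) : ℝ) : Rmax)) ∉ W := by
    by_contra hcon
    push_neg at hcon
    apply hfg
    have hlim : Tendsto (fun M : ℕ => ((f, fun i => g i ⊔ ((-(M:ℝ) : ℝ) : Rmax)) :
        RmaxVec n × RmaxVec n)) atTop (𝓝 (f, g)) := by
      refine Tendsto.prodMk_nhds tendsto_const_nhds ?_
      rw [tendsto_pi_nhds]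
      intro i
      by_cases hgi : g i = ⊥
      · have e : (fun M : ℕ => g i ⊔ ((-(M:ℝ) : ℝ) : Rmax))
            = fun M : ℕ => ((0 - (M:ℝ) : ℝ) : Rmax) := by
          funext M
          rw [hgi, bot_sup_eq]
          norm_num
        rw [e, hgi]
        exact tend_bot_of_ge 0 (fun M => (M:ℝ)) (fun M => le_refl _)
      · rcases coe_real_of_ne_bot hgi with ⟨r, hr⟩
        apply Tendsto.congr' (f₁ := fun _ : ℕ => g i)
        · have hev : ∀ M : ℕ, Nat.ceil (-r) ≤ M → g i = g i ⊔ ((-(M:ℝ) : ℝ) : Rmax) := by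
            intro M hM
            have h1 : -r ≤ (M:ℝ) := le_trans (Nat.le_ceil (-r)) (by exact_mod_cast hM)
            rw [hr, sup_eq_left.2 (by exact_mod_cast (by linarith : -(M:ℝ) ≤ r) : ((-(M:ℝ) : ℝ) : Rmax) ≤ (r : Rmax))]
          exact Filter.eventually_atTop.2 ⟨Nat.ceil (-r), hev⟩
        · exact tendsto_const_nhds
    exact hW.mem_of_tendsto hlim (Filter.Eventually.of_forall hcon)
  obtain ⟨M, hMne⟩ := hM
  set g' : RmaxVec n := fun i => g i ⊔ ((-(M:ℝ) : ℝ) : Rmax) with hg'def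
  have hg'bd : ∀ i, ((-(M:ℝ) : ℝ) : Rmax) ≤ g' i := fun i => le_sup_right
  obtain ⟨x, hx1, hx2⟩ := sep_core hW hP f g' (M:ℝ) hg'bd hMne
  have hxd : x ∈ mpDiamond W := hx1
  have h1 : mpBracket f x ≤ mpBracket g x := hmem x hxd
  have h2 : mpBracket g x ≤ mpBracket g' x :=
    mpBracket_mono x (fun i => le_sup_left)
  exact absurd (h1.trans h2) (not_le.2 hx2)

-- continuity of the bracket
lemma cont_add_right (c : Rmax) : Continuous fun a : Rmax => a + c := by
  induction c using WithBot.recBotCoe with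
  | bot =>
    have e : (fun a : Rmax => a + ⊥) = fun _ => ⊥ := by
      funext a; exact WithBot.add_bot a
    rw [e]; exact continuous_const
  | coe r =>
    have e : (fun a : Rmax => a + (r : Rmax)) = ⇑((OrderIso.addRight r).withBotCongr) := by
      funext a
      induction a using WithBot.recBotCoe with
      | bot => simp
      | coe s =>
        show _ = (Equiv.optionCongr (Equiv.addRight r)) ↑s
        simp only [Equiv.optionCongr_apply, Option.map_coe, Equiv.coe_addRight]
        exact (WithBot.coe_add s r).symm
    rw [e]
    exact OrderIso.continuous _

lemma cont_bracket (x : RmaxVec n) : Continuous fun y : RmaxVec n => mpBracket y x := by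
  have key : ∀ s : Finset (Fin n),
      Continuous fun y : RmaxVec n => s.sup (fun i => y i + x i) := by
    intro s
    induction s using Finset.induction with
    | empty => simpa using continuous_const
    | @insert a s ha ih =>
      have e : (fun y : RmaxVec n => (insert a s).sup (fun i => y i + x i))
          = fun y => (y a + x a) ⊔ s.sup (fun i => y i + x i) := by
        funext y; rw [Finset.sup_insert]
      rw [e]
      exact Continuous.max ((cont_add_right (x a)).comp (continuous_apply a)) ih
  exact key Finset.univ

lemma isClosed_mpPolar (V : Set (RmaxVec n)) : IsClosed (mpPolar V) := by
  have e : mpPolar V = ⋂ x ∈ V,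
      {p : RmaxVec n × RmaxVec n | mpBracket p.1 x ≤ mpBracket p.2 x} := by
    ext p; simp [mpPolar]
  rw [e]
  exact isClosed_biInter fun x _ =>
    isClosed_le ((cont_bracket x).comp continuous_fst) ((cont_bracket x).comp continuous_snd)

lemma isClosed_mpOrtho (V : Set (RmaxVec n)) : IsClosed (mpOrtho V) := by
  have e : mpOrtho V = ⋂ x ∈ V,
      {p : RmaxVec n × RmaxVec n | mpBracket p.1 x = mpBracket p.2 x} := by
    ext p; simp [mpOrtho]
  rw [e]
  exact isClosed_biInter fun x _ =>
    isClosed_eq ((cont_bracket x).comp continuous_fst) ((cont_bracket x).comp continuous_snd)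

lemma isPolarCone_mpPolar (V : Set (RmaxVec n)) : IsPolarCone (mpPolar V) := by
  refine ⟨⟨?_, ?_, ?_⟩, ?_⟩
  · rintro p hp q hq lam mu x hx
    rw [mpBracket_maxComb, mpBracket_maxComb]
    exact sup_le_sup (add_le_add (hp x hx) le_rfl) (add_le_add (hq x hx) le_rfl)
  · intro f x hx; exact le_refl _
  · intro f g h h1 h2 x hx; exact (h1 x hx).trans (h2 x hx)
  · intro f g hle x hx; exact mpBracket_mono x hle

lemma isCongruence_mpOrtho (V : Set (RmaxVec n)) : IsCongruence (mpOrtho V) := by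
  refine ⟨⟨?_, ?_, ?_⟩, ?_⟩
  · rintro p hp q hq lam mu x hx
    rw [mpBracket_maxComb, mpBracket_maxComb, hp x hx, hq x hx]
  · intro f x hx; rfl
  · intro f g h h1 h2 x hx; exact (h1 x hx).trans (h2 x hx)
  · intro f g hfg x hx; exact (hfg x hx).symm

-- Congruence bidual via the associated polar cone
lemma cong_bidual (hW : IsClosed W) (hC : IsCongruence W) :
    mpOrtho (mpTop W) ⊆ W := by
  classical
  set Wh : Set (RmaxVec n × RmaxVec n) :=
    {p | ((fun i => p.1 i ⊔ p.2 i), p.2) ∈ W} with hWh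
  have hsup : ∀ {u v u' v' : RmaxVec n}, (u, v) ∈ W → (u', v') ∈ W →
      ((fun i => u i ⊔ u' i), (fun i => v i ⊔ v' i)) ∈ W := by
    intro u v u' v' h h'
    have := hC.1.1 (u,v) h (u',v') h' 0 0
    rwa [maxComb_zero, maxComb_zero] at this
  have hdiag := hC.1.2.1
  have htrans := hC.1.2.2
  have hsymm := hC.2
  -- Wh is closed
  have hWhclosed : IsClosed Wh := by
    have : Wh = (fun p : RmaxVec n × RmaxVec n => ((fun i => p.1 i ⊔ p.2 i), p.2)) ⁻¹' W := rfl
    rw [this]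
    apply IsClosed.preimage ?_ hW
    exact Continuous.prodMk
      (continuous_pi fun i => Continuous.max
        ((continuous_apply i).comp continuous_fst) ((continuous_apply i).comp continuous_snd))
      continuous_snd
  -- Wh is a polar cone
  have hWhpc : IsPolarCone Wh := by
    refine ⟨⟨?_, ?_, ?_⟩, ?_⟩
    · rintro ⟨u₁, v₁⟩ h1 ⟨u₂, v₂⟩ h2 lam mu
      have h3 := hC.1.1 _ h1 _ h2 lam mu
      have e : (fun i => maxComb u₁ u₂ lam mu i ⊔ maxComb v₁ v₂ lam mu i)
          = maxComb (fun i => u₁ i ⊔ v₁ i) (fun i => u₂ i ⊔ v₂ i) lam mu := by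
        funext i
        simp only [maxComb]
        have e1 : (u₁ i ⊔ v₁ i) + lam = (u₁ i + lam) ⊔ (v₁ i + lam) :=
          (monotone_id.add_const lam).map_max
        have e2 : (u₂ i ⊔ v₂ i) + mu = (u₂ i + mu) ⊔ (v₂ i + mu) :=
          (monotone_id.add_const mu).map_max
        rw [e1, e2]
        exact max_max_max_comm _ _ _ _
      show ((fun i => maxComb u₁ u₂ lam mu i ⊔ maxComb v₁ v₂ lam mu i),
        maxComb v₁ v₂ lam mu) ∈ W
      rw [e]
      exact h3
    · intro f
      show ((fun i => f i ⊔ f i), f) ∈ W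
      have e : (fun i => f i ⊔ f i) = f := by funext i; exact sup_idem _
      rw [e]; exact hdiag f
    · intro u v w h1 h2
      -- h1 : (u⊔v, v) ∈ W, h2 : (v⊔w, w) ∈ W ⊢ (u⊔w, w) ∈ W
      have A : ((fun i => (u i ⊔ v i) ⊔ w i), (fun i => v i ⊔ w i)) ∈ W :=
        hsup h1 (hdiag w)
      have B : ((fun i => (u i ⊔ v i) ⊔ w i), w) ∈ W := htrans _ _ _ A h2
      have C : (w, (fun i => v i ⊔ w i)) ∈ W := hsymm _ _ h2
      have D : ((fun i => (u i ⊔ w i) ⊔ w i), (fun i => (u i ⊔ w i) ⊔ (v i ⊔ w i))) ∈ W :=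
        hsup (hdiag (fun i => u i ⊔ w i)) C
      have e1 : (fun i => (u i ⊔ w i) ⊔ w i) = (fun i => u i ⊔ w i) := by
        funext i; rw [sup_assoc, sup_idem]
      have e2 : (fun i => (u i ⊔ w i) ⊔ (v i ⊔ w i)) = (fun i => (u i ⊔ v i) ⊔ w i) := by
        funext i
        rw [max_max_max_comm, sup_idem]
      rw [e1, e2] at D
      exact htrans _ _ _ D B
    · intro u v hle
      show ((fun i => u i ⊔ v i), v) ∈ W
      have e : (fun i => u i ⊔ v i) = v := by
        funext i; exact sup_eq_right.2 (hle i)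
      rw [e]; exact hdiag v
  -- mpDiamond Wh = mpTop W
  have hdia : mpDiamond Wh = mpTop W := by
    ext x
    constructor
    · intro hx p hp
      have e22 : (fun i => p.2 i ⊔ p.2 i) = p.2 := by funext i; exact sup_idem _
      have h1 : ((fun i => p.1 i ⊔ p.2 i), p.2) ∈ W := by
        have := hsup hp (hdiag p.2)
        rwa [e22] at this
      have h1' : (p.1, p.2) ∈ Wh := h1
      have e11 : (fun i => p.1 i ⊔ p.1 i) = p.1 := by funext i; exact sup_idem _
      have h2 : ((fun i => p.2 i ⊔ p.1 i), p.1) ∈ W := by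
        have := hsup (hsymm _ _ hp) (hdiag p.1)
        rwa [e11] at this
      have h2' : (p.2, p.1) ∈ Wh := h2
      exact le_antisymm (hx (p.1, p.2) h1') (hx (p.2, p.1) h2')
    · intro hx p hp
      have h1 : mpBracket (fun i => p.1 i ⊔ p.2 i) x = mpBracket p.2 x := hx _ hp
      have h2 : mpBracket p.1 x ≤ mpBracket (fun i => p.1 i ⊔ p.2 i) x :=
        mpBracket_mono x (fun i => le_sup_left)
      exact h2.trans_eq h1
  -- conclude
  rintro ⟨f, g⟩ hmem
  have hfg1 : (f, g) ∈ mpPolar (mpDiamond Wh) := by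
    intro x hx
    rw [hdia] at hx
    exact (hmem x hx).le
  have hgf1 : (g, f) ∈ mpPolar (mpDiamond Wh) := by
    intro x hx
    rw [hdia] at hx
    exact (hmem x hx).ge
  have hfg2 : ((fun i => f i ⊔ g i), g) ∈ W := polar_bidual hWhclosed hWhpc hfg1
  have hgf2 : ((fun i => g i ⊔ f i), f) ∈ W := polar_bidual hWhclosed hWhpc hgf1
  have hgf3 : (f, (fun i => g i ⊔ f i)) ∈ W := hsymm _ _ hgf2
  have e : (fun i => g i ⊔ f i) = (fun i => f i ⊔ g i) := by
    funext i; exact sup_comm _ _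
  rw [e] at hgf3
  exact htrans _ _ _ hgf3 hfg2

end MPAux

/-- Corollary of Theorem 4.6 of the paper: for any `U ⊆ (ℝmax^n)²`, `(U⋄)°` is
the smallest closed polar cone containing `U`, and `(U⊤)⊥` is the smallest
closed congruence containing `U`. -/
theorem smallest_closed_polar_cone_and_congruence (n : ℕ)
    (U : Set (RmaxVec n × RmaxVec n)) :
    ((IsClosed (mpPolar (mpDiamond U)) ∧ IsPolarCone (mpPolar (mpDiamond U))) ∧
      U ⊆ mpPolar (mpDiamond U) ∧
      (∀ W : Set (RmaxVec n × RmaxVec n), IsClosed W → IsPolarCone W →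
        U ⊆ W → mpPolar (mpDiamond U) ⊆ W)) ∧
    ((IsClosed (mpOrtho (mpTop U)) ∧ IsCongruence (mpOrtho (mpTop U))) ∧
      U ⊆ mpOrtho (mpTop U) ∧
      (∀ W : Set (RmaxVec n × RmaxVec n), IsClosed W → IsCongruence W →
        U ⊆ W → mpOrtho (mpTop U) ⊆ W)) := by
  constructor
  · refine ⟨⟨MPAux.isClosed_mpPolar _, MPAux.isPolarCone_mpPolar _⟩, ?_, ?_⟩
    · intro p hp x hx
      exact hx p hp
    · intro W hWc hWp hUW p hp
      apply MPAux.polar_bidual hWc hWp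
      intro x hx
      exact hp x (fun q hq => hx q (hUW hq))
  · refine ⟨⟨MPAux.isClosed_mpOrtho _, MPAux.isCongruence_mpOrtho _⟩, ?_, ?_⟩
    · intro p hp x hx
      exact hx p hp
    · intro W hWc hWcg hUW p hp
      apply MPAux.cong_bidual hWc hWcg
      intro x hx
      exact hp x (fun q hq => hx q (hUW hq))
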